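/- In the many-to-one stable matching setting where each acceptor has a quota q and strict preferences, proposer-optimal deferred acceptance yields a stable matching in which every proposer is matched to the best acceptor achievable in any stable matching: if any stable matching matches proposer p to acceptor a, then p weakly prefers its deferred-acceptance partner to a. -/

import Mathlib

/-- State of the many-to-one deferred acceptance procedure: `pending p` is the list of
acceptors proposer `p` has not yet proposed to (in decreasing order of preference),
and `matched a` is the set of proposers tentatively held by acceptor `a`. -/
structure DAState (np na : ℕ) where
  pending : Fin np → List (Fin na)
  matched : Fin na → Finset (Fin np)

/-- A proposer is free if no acceptor currently holds it. -/
def isFreeP {np na : ℕ} (s : DAState np na) (p : Fin np) : Bool :=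
  (List.finRange na).all fun a => decide (p ∉ s.matched a)

/-- The next proposer to propose: a free proposer with a nonempty remaining list. -/
def nextProposer {np na : ℕ} (s : DAState np na) : Option (Fin np) :=
  (List.finRange np).find? fun p => !(s.pending p).isEmpty && isFreeP s p

/-- One step of many-to-one deferred acceptance with quotas `q`: a free proposer
proposes to the next acceptor `a` on its list; `a` keeps the `q a` best proposers it
has seen (with respect to its ranking `prefA a`, lower is better) and rejects the rest. -/
noncomputable def daStep {np na : ℕ} (q : Fin na → ℕ) (prefA : Fin na → Fin np → ℕ)
    (s : DAState np na) : DAState np na :=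
  match nextProposer s with
  | none => s
  | some p =>
    match s.pending p with
    | [] => s
    | a :: rest =>
      let pending' := Function.update s.pending p rest
      let S := insert p (s.matched a)
      if S.card ≤ q a then
        ⟨pending', Function.update s.matched a S⟩
      else
        match S.toList.argmax (prefA a) with
        | none => ⟨pending', s.matched⟩
        | some worst => ⟨pending', Function.update s.matched a (S.erase worst)⟩

/-- The many-to-one matching produced by proposer-optimal deferred acceptance. -/
noncomputable def galeShapley {np na : ℕ} (prefP : Fin np → List (Fin na))
    (q : Fin na → ℕ) (prefA : Fin na → Fin np → ℕ) : Fin na → Finset (Fin np) :=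
  ((daStep q prefA)^[∑ p, (prefP p).length] ⟨prefP, fun _ => ∅⟩).matched

/-- `ν` is a many-to-one matching: quotas respected, each proposer matched to at most
one acceptor, and only to acceptable acceptors. -/
def IsMatchingQ {np na : ℕ} (prefP : Fin np → List (Fin na)) (q : Fin na → ℕ)
    (ν : Fin na → Finset (Fin np)) : Prop :=
  (∀ a, (ν a).card ≤ q a) ∧
  (∀ p a a', p ∈ ν a → p ∈ ν a' → a = a') ∧
  (∀ a p, p ∈ ν a → a ∈ prefP p)

/-- Stability: no blocking pair `(p, a)` where `a` is acceptable to `p`, not matched to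
`p`, `p` prefers `a` to its current match (or is unmatched), and `a` has a free slot or
prefers `p` to one of its current matches. -/
def IsStable {np na : ℕ} (prefP : Fin np → List (Fin na)) (q : Fin na → ℕ)
    (prefA : Fin na → Fin np → ℕ) (ν : Fin na → Finset (Fin np)) : Prop :=
  IsMatchingQ prefP q ν ∧
  ¬ ∃ (p : Fin np) (a : Fin na),
      a ∈ prefP p ∧ p ∉ ν a ∧
      (∀ a', p ∈ ν a' → (prefP p).idxOf a < (prefP p).idxOf a') ∧
      ((ν a).card < q a ∨ ∃ p' ∈ ν a, prefA a p < prefA a p')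

section GSAux

variable {np na : ℕ}

lemma daStep_none {q : Fin na → ℕ} {prefA : Fin na → Fin np → ℕ} {s : DAState np na}
    (h : nextProposer s = none) : daStep q prefA s = s := by
  unfold daStep; rw [h]

lemma daStep_pending {q : Fin na → ℕ} {prefA : Fin na → Fin np → ℕ} {s : DAState np na}
    {p a rest} (hnp : nextProposer s = some p) (hpend : s.pending p = a :: rest) :
    (daStep q prefA s).pending = Function.update s.pending p rest := by
  unfold daStep
  rw [hnp]; dsimp only; rw [hpend]; dsimp only
  split
  · rfl
  · split <;> rfl

lemma daStep_matched {q : Fin na → ℕ} {prefA : Fin na → Fin np → ℕ} {s : DAState np na}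
    {p a rest} (hnp : nextProposer s = some p) (hpend : s.pending p = a :: rest) :
    ((insert p (s.matched a)).card ≤ q a ∧
      (daStep q prefA s).matched = Function.update s.matched a (insert p (s.matched a)))
    ∨ (¬ (insert p (s.matched a)).card ≤ q a ∧
        ∃ worst, (insert p (s.matched a)).toList.argmax (prefA a) = some worst ∧
        (daStep q prefA s).matched = Function.update s.matched a ((insert p (s.matched a)).erase worst)) := by
  unfold daStep
  rw [hnp]; dsimp only; rw [hpend]; dsimp only
  split_ifs with h
  · exact Or.inl ⟨h, rfl⟩
  · refine Or.inr ⟨h, ?_⟩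
    cases harg : (insert p (s.matched a)).toList.argmax (prefA a) with
    | none =>
      exfalso
      have he : (insert p (s.matched a)).toList = [] := List.argmax_eq_none.1 harg
      have hp : p ∈ (insert p (s.matched a)).toList :=
        Finset.mem_toList.2 (Finset.mem_insert_self _ _)
      rw [he] at hp; exact absurd hp List.not_mem_nil
    | some w =>
      refine ⟨w, rfl, ?_⟩
      simp only [harg]

/-- Facts extracted from `nextProposer s = some p`. -/
lemma nextProposer_spec {s : DAState np na} {p : Fin np} (hnp : nextProposer s = some p) :
    s.pending p ≠ [] ∧ ∀ b, p ∉ s.matched b := by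
  have hfp := List.find?_some hnp
  simp only [Bool.and_eq_true, Bool.not_eq_true', List.isEmpty_iff] at hfp
  refine ⟨by simpa using hfp.1, ?_⟩
  have := hfp.2
  simp only [isFreeP, List.all_eq_true, decide_eq_true_eq] at this
  exact fun b => this b (List.mem_finRange b)

lemma nextProposer_none {s : DAState np na} (h : nextProposer s = none) (p : Fin np)
    (hne : s.pending p ≠ []) : ∃ b, p ∈ s.matched b := by
  have := List.find?_eq_none.1 h p (List.mem_finRange p)
  simp only [Bool.and_eq_true, Bool.not_eq_true', List.isEmpty_iff, isFreeP,
    List.all_eq_true, decide_eq_true_eq, not_and, not_forall] at this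
  obtain ⟨b, hb⟩ := this (List.isEmpty_eq_false_iff.2 hne)
  exact ⟨b, not_not.1 (by simpa using hb.2)⟩

/-- Two suffixes of the same list with equal length are equal. -/
lemma suffix_eq_of_length {α : Type*} {l s1 s2 : List α} (h1 : s1 <:+ l) (h2 : s2 <:+ l)
    (hlen : s1.length = s2.length) : s1 = s2 := by
  obtain ⟨t1, e1⟩ := h1
  obtain ⟨t2, e2⟩ := h2
  exact (List.append_inj' (e1.trans e2.symm) hlen).2

lemma indexOf_lt_of_mem_suffix {α : Type*} [DecidableEq α] {l t : List α} {a b : α}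
    (hnd : l.Nodup) (hs : a :: t <:+ l) (hb : b ∈ t) :
    l.idxOf a < l.idxOf b := by
  obtain ⟨pre, rfl⟩ := hs
  rw [List.nodup_append] at hnd
  obtain ⟨-, hct, hdisj⟩ := hnd
  have ha : a ∉ pre := fun h => hdisj a h a List.mem_cons_self rfl
  have hbp : b ∉ pre := fun h => hdisj b h b (List.mem_cons_of_mem _ hb) rfl
  have hba : b ≠ a := by rintro rfl; exact (List.nodup_cons.1 hct).1 hb
  rw [List.idxOf_append_of_notMem ha, List.idxOf_append_of_notMem hbp,
    List.idxOf_cons_self, List.idxOf_cons_ne t hba.symm]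
  omega

lemma indexOf_lt_of_not_mem_suffix {α : Type*} [DecidableEq α] {l t : List α} {a b : α}
    (hnd : l.Nodup) (hs : a :: t <:+ l) (hbl : b ∈ l) (hb : b ∉ a :: t) :
    l.idxOf b < l.idxOf a := by
  obtain ⟨pre, rfl⟩ := hs
  rw [List.nodup_append] at hnd
  obtain ⟨-, -, hdisj⟩ := hnd
  have ha : a ∉ pre := fun h => hdisj a h a List.mem_cons_self rfl
  have hbp : b ∈ pre := by
    rcases List.mem_append.1 hbl with h | h
    · exact h
    · exact absurd h hb
  rw [List.idxOf_append_of_notMem ha, List.idxOf_append_of_mem hbp,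
    List.idxOf_cons_self, Nat.add_zero]
  exact List.idxOf_lt_length_iff.2 hbp

/-- Structural invariant of the deferred-acceptance state. -/
structure GInv (prefP : Fin np → List (Fin na)) (q : Fin na → ℕ)
    (prefA : Fin na → Fin np → ℕ) (s : DAState np na) : Prop where
  pend_suffix : ∀ p, s.pending p <:+ prefP p
  match_suffix : ∀ a p, p ∈ s.matched a → a :: s.pending p <:+ prefP p
  card_le : ∀ a, (s.matched a).card ≤ q a
  rej : ∀ p a, a ∈ prefP p → a ∉ s.pending p → p ∉ s.matched a →
      (s.matched a).card = q a ∧ ∀ p' ∈ s.matched a, prefA a p' < prefA a p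

lemma GInv.unique {prefP : Fin np → List (Fin na)} {q : Fin na → ℕ}
    {prefA : Fin na → Fin np → ℕ} {s : DAState np na} (hI : GInv prefP q prefA s)
    {p a a'} (h1 : p ∈ s.matched a) (h2 : p ∈ s.matched a') : a = a' := by
  have e := suffix_eq_of_length (hI.match_suffix a p h1) (hI.match_suffix a' p h2) rfl
  exact (List.cons.injEq _ _ _ _ ▸ e).1

lemma GInv.mem_prefP {prefP : Fin np → List (Fin na)} {q : Fin na → ℕ}
    {prefA : Fin na → Fin np → ℕ} {s : DAState np na} (hI : GInv prefP q prefA s)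
    {p a} (h : p ∈ s.matched a) : a ∈ prefP p :=
  (hI.match_suffix a p h).mem (List.mem_cons_self)

/-- The proposer-optimality invariant: no proposer has ever been rejected by an
acceptor with which it is matched in some stable matching. -/
def OptInv (prefP : Fin np → List (Fin na)) (q : Fin na → ℕ)
    (prefA : Fin na → Fin np → ℕ) (s : DAState np na) : Prop :=
  ∀ ν : Fin na → Finset (Fin np), IsStable prefP q prefA ν →
    ∀ p a, p ∈ ν a → a ∉ s.pending p → p ∈ s.matched a

end GSAux

section GSMain

variable {np na : ℕ}

lemma assemble {prefP : Fin np → List (Fin na)} {q : Fin na → ℕ}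
    {prefA : Fin na → Fin np → ℕ}
    (hP : ∀ p, (prefP p).Nodup) {s : DAState np na} (hI : GInv prefP q prefA s)
    (hJ : OptInv prefP q prefA s) {p : Fin np} {a : Fin na} {rest : List (Fin na)}
    (hfree : ∀ b, p ∉ s.matched b) (hpend : s.pending p = a :: rest)
    {X : Finset (Fin np)}
    (hXsub : X ⊆ insert p (s.matched a))
    (hXcard : X.card ≤ q a)
    (hXrej : ∀ p'', a ∈ prefP p'' → p'' ∉ X → (p'' = p ∨ a ∉ s.pending p'') →
        X.card = q a ∧ ∀ p' ∈ X, prefA a p' < prefA a p'')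
    (s' : DAState np na)
    (hps : s'.pending = Function.update s.pending p rest)
    (hms : s'.matched = Function.update s.matched a X) :
    GInv prefP q prefA s' ∧ OptInv prefP q prefA s' := by
  have hsufp : a :: rest <:+ prefP p := hpend ▸ hI.pend_suffix p
  have hrest : rest <:+ prefP p := (List.suffix_cons a rest).trans hsufp
  have hpend' : ∀ p', p' ≠ p → s'.pending p' = s.pending p' := fun p' h => by
    rw [hps, Function.update_of_ne h]
  have hpendp : s'.pending p = rest := by rw [hps, Function.update_self]
  have hm' : ∀ b, b ≠ a → s'.matched b = s.matched b := fun b h => by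
    rw [hms, Function.update_of_ne h]
  have hma : s'.matched a = X := by rw [hms, Function.update_self]
  have hms' : ∀ b p'', p'' ∈ s'.matched b → b :: s'.pending p'' <:+ prefP p'' := by
    intro b p'' hmem
    by_cases hb : b = a
    · subst hb
      rw [hma] at hmem
      rcases Finset.mem_insert.1 (hXsub hmem) with rfl | hold
      · rw [hpendp]; exact hsufp
      · have hne : p'' ≠ p := fun h => hfree b (h ▸ hold)
        rw [hpend' _ hne]; exact hI.match_suffix b p'' hold
    · rw [hm' b hb] at hmem
      have hne : p'' ≠ p := fun h => hfree b (h ▸ hmem)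
      rw [hpend' _ hne]; exact hI.match_suffix b p'' hmem
  have hGI : GInv prefP q prefA s' := by
    constructor
    · intro p'
      by_cases h : p' = p
      · subst h; rw [hpendp]; exact hrest
      · rw [hpend' _ h]; exact hI.pend_suffix p'
    · exact hms'
    · intro b
      by_cases hb : b = a
      · subst hb; rw [hma]; exact hXcard
      · rw [hm' b hb]; exact hI.card_le b
    · intro p'' b hb hbpend hbm
      by_cases hba : b = a
      · subst hba
        rw [hma] at hbm ⊢
        refine hXrej p'' hb hbm ?_
        by_cases hp : p'' = p
        · exact Or.inl hp
        · exact Or.inr (by rwa [hpend' _ hp] at hbpend)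
      · rw [hm' b hba] at hbm ⊢
        by_cases hp : p'' = p
        · subst hp
          refine hI.rej p'' b hb ?_ (hfree b)
          rw [hpend]
          rw [hpendp] at hbpend
          exact fun hm2 => (List.mem_cons.1 hm2).elim hba hbpend
        · rw [hpend' _ hp] at hbpend
          exact hI.rej p'' b hb hbpend hbm
  refine ⟨hGI, ?_⟩
  intro ν hν p'' b hmem hbpend
  obtain ⟨⟨hνcard, hνuniq, hνacc⟩, hνblock⟩ := hν
  by_cases hba : b = a
  swap
  · rw [hm' b hba]
    by_cases hp : p'' = p
    · subst hp
      refine hJ ν ⟨⟨hνcard, hνuniq, hνacc⟩, hνblock⟩ p'' b hmem ?_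
      rw [hpend]
      rw [hpendp] at hbpend
      exact fun hm2 => (List.mem_cons.1 hm2).elim hba hbpend
    · rw [hpend' _ hp] at hbpend
      exact hJ ν ⟨⟨hνcard, hνuniq, hνacc⟩, hνblock⟩ p'' b hmem hbpend
  · subst hba
    rw [hma]
    by_contra hnX
    have hdisj : p'' = p ∨ b ∉ s.pending p'' := by
      by_cases hp : p'' = p
      · exact Or.inl hp
      · exact Or.inr (by rwa [hpend' _ hp] at hbpend)
    obtain ⟨hXfull, hXbet⟩ := hXrej p'' (hνacc b p'' hmem) hnX hdisj
    have hnsub : ¬ X ⊆ ν b := by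
      intro hsub
      have h1 : insert p'' X ⊆ ν b := Finset.insert_subset hmem hsub
      have h2 := Finset.card_le_card h1
      rw [Finset.card_insert_of_notMem hnX] at h2
      have := hνcard b
      omega
    obtain ⟨p', hp'X, hp'ν⟩ := Finset.not_subset.1 hnsub
    have hp'm : p' ∈ s'.matched b := by rw [hma]; exact hp'X
    have hsfx : b :: s'.pending p' <:+ prefP p' := hms' b p' hp'm
    have hbetter : ∀ a3, p' ∈ ν a3 → (prefP p').idxOf b < (prefP p').idxOf a3 := by
      intro a3 h3
      have ha3b : a3 ≠ b := fun h => hp'ν (h ▸ h3)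
      by_contra hle
      push_neg at hle
      have ha3pend : a3 ∉ s.pending p' := by
        intro hmem3
        have hmem3' : a3 ∈ b :: s'.pending p' := by
          by_cases hp : p' = p
          · subst hp; rw [hpendp]; rw [hpend] at hmem3; exact hmem3
          · rw [hpend' _ hp]; exact List.mem_cons_of_mem _ hmem3
        rcases List.mem_cons.1 hmem3' with h | h
        · exact ha3b h
        · have := indexOf_lt_of_mem_suffix (hP p') hsfx h
          omega
      have hm3 := hJ ν ⟨⟨hνcard, hνuniq, hνacc⟩, hνblock⟩ p' a3 h3 ha3pend
      rcases Finset.mem_insert.1 (hXsub hp'X) with rfl | hold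
      · exact hfree a3 hm3
      · exact ha3b (hI.unique hm3 hold)
    exact hνblock ⟨p', b, hsfx.mem (List.mem_cons_self), hp'ν, hbetter,
      Or.inr ⟨p'', hmem, hXbet p' hp'X⟩⟩

end GSMain

section GSMain2

variable {np na : ℕ}

lemma step_preserve {prefP : Fin np → List (Fin na)} {q : Fin na → ℕ}
    {prefA : Fin na → Fin np → ℕ}
    (hP : ∀ p, (prefP p).Nodup) (hA : ∀ a, Function.Injective (prefA a))
    {s : DAState np na} (hI : GInv prefP q prefA s) (hJ : OptInv prefP q prefA s) :
    GInv prefP q prefA (daStep q prefA s) ∧ OptInv prefP q prefA (daStep q prefA s) := by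
  cases hnp : nextProposer s with
  | none => rw [daStep_none hnp]; exact ⟨hI, hJ⟩
  | some p =>
    obtain ⟨hne, hfree⟩ := nextProposer_spec hnp
    cases hpend : s.pending p with
    | nil => exact absurd hpend hne
    | cons a rest =>
      have hps := daStep_pending (q := q) (prefA := prefA) hnp hpend
      have hScard : (insert p (s.matched a)).card = (s.matched a).card + 1 :=
        Finset.card_insert_of_notMem (hfree a)
      rcases daStep_matched (q := q) (prefA := prefA) hnp hpend with
        ⟨hcard, hms⟩ | ⟨hcard, worst, hw, hms⟩
      · refine assemble hP hI hJ hfree hpend (Finset.Subset.refl _) hcard ?_ _ hps hms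
        intro p'' hpref hnX hdisj
        exfalso
        rcases hdisj with rfl | hnpend
        · exact hnX (Finset.mem_insert_self _ _)
        · have hold : p'' ∉ s.matched a := fun h => hnX (Finset.mem_insert_of_mem h)
          obtain ⟨hc, -⟩ := hI.rej p'' a hpref hnpend hold
          omega
      · have hwS : worst ∈ insert p (s.matched a) :=
          Finset.mem_toList.1 (List.argmax_mem (Option.mem_def.2 hw))
        have hle : ∀ x ∈ insert p (s.matched a), prefA a x ≤ prefA a worst := fun x hx =>
          List.le_of_mem_argmax (Finset.mem_toList.2 hx) (Option.mem_def.2 hw)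
        have hSq : (insert p (s.matched a)).card = q a + 1 := by
          have := hI.card_le a; omega
        have hXcard : ((insert p (s.matched a)).erase worst).card = q a := by
          rw [Finset.card_erase_of_mem hwS, hSq]; omega
        refine assemble hP hI hJ hfree hpend (Finset.erase_subset _ _)
          (le_of_eq hXcard) ?_ _ hps hms
        intro p'' hpref hnX hdisj
        refine ⟨hXcard, ?_⟩
        intro p' hp'
        have hp'S : p' ∈ insert p (s.matched a) := Finset.mem_of_mem_erase hp'
        have hp'w : p' ≠ worst := Finset.ne_of_mem_erase hp'
        have hp'lt : prefA a p' < prefA a worst :=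
          lt_of_le_of_ne (hle p' hp'S) (fun h => hp'w (hA a h))
        by_cases hpw : p'' = worst
        · subst hpw; exact hp'lt
        · have hp''S : p'' ∉ insert p (s.matched a) := fun h =>
            hnX (Finset.mem_erase.2 ⟨hpw, h⟩)
          have hp2 : p'' ≠ p := fun h => hp''S (h ▸ Finset.mem_insert_self _ _)
          have hnpend : a ∉ s.pending p'' := hdisj.resolve_left hp2
          have hold : p'' ∉ s.matched a := fun h => hp''S (Finset.mem_insert_of_mem h)
          obtain ⟨-, hbet⟩ := hI.rej p'' a hpref hnpend hold
          rcases Finset.mem_insert.1 hp'S with rfl | holdp'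
          · have hwold : worst ∈ s.matched a := by
              rcases Finset.mem_insert.1 hwS with h | h
              · exact absurd h.symm hp'w
              · exact h
            exact lt_trans hp'lt (hbet worst hwold)
          · exact hbet p' holdp'

lemma measure_step {q : Fin na → ℕ} {prefA : Fin na → Fin np → ℕ}
    {s : DAState np na} {p} (hnp : nextProposer s = some p) :
    (∑ p', ((daStep q prefA s).pending p').length) + 1 = ∑ p', (s.pending p').length := by
  obtain ⟨hne, -⟩ := nextProposer_spec hnp
  cases hpend : s.pending p with
  | nil => exact absurd hpend hne
  | cons a rest =>
    rw [daStep_pending hnp hpend]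
    have h1 : ∀ p', (Function.update s.pending p rest p').length
        = Function.update (fun x => (s.pending x).length) p rest.length p' := fun p' =>
      Function.apply_update (fun _ l => l.length) s.pending p rest p'
    simp only [h1]
    rw [Finset.sum_update_of_mem (Finset.mem_univ p),
      ← Finset.add_sum_erase Finset.univ _ (Finset.mem_univ p), hpend]
    simp only [Finset.sdiff_singleton_eq_erase, List.length_cons]
    omega

lemma iterate_none {q : Fin na → ℕ} {prefA : Fin na → Fin np → ℕ} {s : DAState np na}
    (h : nextProposer s = none) (n : ℕ) : (daStep q prefA)^[n] s = s := by
  induction n with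
  | zero => rfl
  | succ n ih => rw [Function.iterate_succ_apply, daStep_none h, ih]

lemma terminal_after {q : Fin na → ℕ} {prefA : Fin na → Fin np → ℕ} :
    ∀ n (s : DAState np na), (∑ p', (s.pending p').length) ≤ n →
    nextProposer ((daStep q prefA)^[n] s) = none := by
  intro n
  induction n with
  | zero =>
    intro s h
    have hz : ∀ p', s.pending p' = [] := fun p' =>
      List.length_eq_zero_iff.1 (Finset.sum_eq_zero_iff.1 (Nat.le_zero.1 h) p' (Finset.mem_univ p'))
    simp only [Function.iterate_zero, id]
    apply List.find?_eq_none.2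
    intro p' _
    simp [hz p']
  | succ n ih =>
    intro s h
    cases hnp : nextProposer s with
    | none => rw [Function.iterate_succ_apply, daStep_none hnp, iterate_none hnp]; exact hnp
    | some p =>
      rw [Function.iterate_succ_apply]
      apply ih
      have := measure_step (q := q) (prefA := prefA) hnp
      omega

end GSMain2

/-- with quotas and strict preferences, proposer-optimal deferred
acceptance yields a stable matching in which every proposer gets the best acceptor
achievable in any stable matching: if some stable matching `ν` matches `p` to `a`,
then `p` is matched by deferred acceptance to an acceptor it weakly prefers to `a`. -/
theorem galeShapley_stable_and_proposer_optimal (np na : ℕ)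
    (prefP : Fin np → List (Fin na)) (q : Fin na → ℕ) (prefA : Fin na → Fin np → ℕ)
    (hP : ∀ p, (prefP p).Nodup) (hA : ∀ a, Function.Injective (prefA a))
    (hq : ∀ a, 0 < q a) :
    IsStable prefP q prefA (galeShapley prefP q prefA) ∧
    (∀ ν : Fin na → Finset (Fin np), IsStable prefP q prefA ν →
      ∀ (p : Fin np) (a : Fin na), p ∈ ν a →
        ∃ a' : Fin na, p ∈ galeShapley prefP q prefA a' ∧
          (prefP p).idxOf a' ≤ (prefP p).idxOf a) := by
  set s0 : DAState np na := ⟨prefP, fun _ => ∅⟩ with hs0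
  set N := ∑ p, (prefP p).length with hN
  set sF := (daStep q prefA)^[N] s0 with hsF
  have hgs : galeShapley prefP q prefA = sF.matched := rfl
  have hI0 : GInv prefP q prefA s0 := by
    constructor
    · intro p; exact List.suffix_refl _
    · intro a p h; exact absurd h (Finset.notMem_empty p)
    · intro a; simp [hs0]
    · intro p a h1 h2 _; exact absurd h1 h2
  have hJ0 : OptInv prefP q prefA s0 := by
    intro ν hν p a hm hp
    exact absurd (hν.1.2.2 a p hm) hp
  have hIJ : ∀ n, GInv prefP q prefA ((daStep q prefA)^[n] s0) ∧
      OptInv prefP q prefA ((daStep q prefA)^[n] s0) := by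
    intro n; induction n with
    | zero => exact ⟨hI0, hJ0⟩
    | succ n ih => rw [Function.iterate_succ_apply']; exact step_preserve hP hA ih.1 ih.2
  obtain ⟨hIF, hJF⟩ := hIJ N
  have hterm : nextProposer sF = none := terminal_after N s0 (le_refl N)
  have hmatchedF : ∀ p, sF.pending p ≠ [] → ∃ b, p ∈ sF.matched b := fun p h =>
    nextProposer_none hterm p h
  constructor
  · refine ⟨?_, ?_⟩
    · exact ⟨fun a => hgs ▸ hIF.card_le a,
        fun p a a' h1 h2 => hIF.unique (hgs ▸ h1) (hgs ▸ h2),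
        fun a p h => hIF.mem_prefP (hgs ▸ h)⟩
    · rintro ⟨p, a, hap, hnm, hbest, hblock⟩
      rw [hgs] at hnm hbest hblock
      have hanp : a ∉ sF.pending p := by
        by_cases hpe : sF.pending p = []
        · rw [hpe]; exact List.not_mem_nil
        · obtain ⟨a', ha'⟩ := hmatchedF p hpe
          intro hmem
          have h1 := indexOf_lt_of_mem_suffix (hP p) (hIF.match_suffix a' p ha') hmem
          have h2 := hbest a' ha'
          omega
      obtain ⟨hcard_eq, hbet⟩ := hIF.rej p a hap hanp hnm
      rcases hblock with h | ⟨p', hp', hlt⟩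
      · rw [hcard_eq] at h; omega
      · have := hbet p' hp'; omega
  · intro ν hν p a hmem
    by_cases hap : a ∈ sF.pending p
    · have hpe : sF.pending p ≠ [] := fun h => List.not_mem_nil (h ▸ hap)
      obtain ⟨a', ha'⟩ := hmatchedF p hpe
      exact ⟨a', hgs ▸ ha',
        le_of_lt (indexOf_lt_of_mem_suffix (hP p) (hIF.match_suffix a' p ha') hap)⟩
    · exact ⟨a, hgs ▸ hJF ν hν p a hmem hap, le_refl _⟩
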